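/- arXiv:0906.4642 — 2 statements merged into one kernel-verified Lean document; each statement's English description precedes it below -/
import Mathlib

section
/- Let k ≥ 1 and let u_1,…,u_k be nonnegative integers. Then there exists a Laurent polynomial Q in the variables x_1,…,x_k with complex coefficients such that for all nonzero x_1,…,x_k ∈ ℂ: Q(x_1,…,x_k) · det_{1≤j,m≤k}( x_j^{m} − x_j^{−m} ) = det_{1≤j,m≤k}( x_j^{u_m} − x_j^{−u_m} ). In other words, the quotient det(x_j^{u_m} − x_j^{−u_m}) / det(x_j^{m} − x_j^{−m}) extends to a Laurent polynomial in x_1,…,x_k. -/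
open scoped BigOperators

noncomputable section AuxSymplecticLaurent

section ChebPart
open Polynomial
open Polynomial
noncomputable def chebS : ℕ → Polynomial ℂ
  | 0 => 0
  | 1 => 1
  | (n+2) => Polynomial.X * chebS (n+1) - chebS n

lemma chebS_eval' (x : ℂ) (hx : x ≠ 0) : ∀ n : ℕ,
    (x - x⁻¹) * (chebS n).eval (x + x⁻¹) = x ^ n - x⁻¹ ^ n
  | 0 => by simp [chebS]
  | 1 => by simp [chebS]
  | (n+2) => by
      have h1 := chebS_eval' x hx (n+1)
      have h0 := chebS_eval' x hx n
      simp only [chebS, Polynomial.eval_sub, Polynomial.eval_mul, Polynomial.eval_X]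
      linear_combination (x + x⁻¹) * h1 - h0 + (x ^ n - x⁻¹ ^ n) * (mul_inv_cancel₀ hx)

lemma chebS_eval (x : ℂ) (hx : x ≠ 0) (n : ℕ) :
    (x - x⁻¹) * (chebS n).eval (x + x⁻¹) = x ^ (n : ℤ) - x ^ (-(n : ℤ)) := by
  rw [zpow_natCast, zpow_neg, zpow_natCast, ← inv_pow]
  exact chebS_eval' x hx n

lemma chebS_monic_deg : ∀ n : ℕ, (chebS (n+1)).Monic ∧ (chebS (n+1)).natDegree = n
  | 0 => by simp [chebS, monic_one]
  | 1 => by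
      have : chebS 2 = Polynomial.X := by simp [chebS]
      simp [this, monic_X]
  | (n+2) => by
      obtain ⟨hm1, hd1⟩ := chebS_monic_deg (n+1)
      obtain ⟨hm0, hd0⟩ := chebS_monic_deg n
      have hmx : (Polynomial.X * chebS (n+2)).Monic := (monic_X.mul hm1)
      have hdx : (Polynomial.X * chebS (n+2)).natDegree = n + 2 := by
        rw [natDegree_mul X_ne_zero hm1.ne_zero, natDegree_X, hd1]; ring
      have hlt : (chebS (n+1)).degree < (Polynomial.X * chebS (n+2)).degree := by
        rw [degree_eq_natDegree hmx.ne_zero, hdx]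
        refine lt_of_le_of_lt degree_le_natDegree ?_
        rw [hd0]
        exact_mod_cast (by omega : n < n + 2)
      constructor
      · show (Polynomial.X * chebS (n+2) - chebS (n+1)).Monic
        exact hmx.sub_of_left hlt
      · show (Polynomial.X * chebS (n+2) - chebS (n+1)).natDegree = n + 2
        rw [natDegree_sub_eq_left_of_natDegree_lt (by rw [hdx, hd0]; omega), hdx]

end ChebPart

section MvPart
open MvPolynomial

variable {σ : Type*} [DecidableEq σ]

lemma aux_dvd_sub_aeval (i j : σ) (f : MvPolynomial σ ℂ) :
    (X i - X j : MvPolynomial σ ℂ) ∣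
      f - MvPolynomial.aeval (Function.update MvPolynomial.X i (X j)) f := by
  induction f using MvPolynomial.induction_on with
  | C a => simp
  | add p q hp hq =>
      rw [map_add, add_sub_add_comm]
      exact dvd_add hp hq
  | mul_X p l hp =>
      rw [map_mul, aeval_X]
      by_cases hl : l = i
      · subst hl
        rw [Function.update_self]
        have : p * X l - (aeval (Function.update X l (X j)) p) * X j
            = p * (X l - X j) + (p - aeval (Function.update X l (X j)) p) * X j := by ring
        rw [this]
        exact dvd_add (Dvd.intro_left p rfl) (hp.mul_right _)
      · rw [Function.update_of_ne hl]
        have : p * X l - (aeval (Function.update X i (X j)) p) * X l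
            = (p - aeval (Function.update X i (X j)) p) * X l := by ring
        rw [this]
        exact hp.mul_right _

lemma aux_dvd_of_aeval_zero (i j : σ) (f : MvPolynomial σ ℂ)
    (h : MvPolynomial.aeval (Function.update MvPolynomial.X i (X j) : σ → MvPolynomial σ ℂ) f = 0) :
    (X i - X j : MvPolynomial σ ℂ) ∣ f := by
  have := aux_dvd_sub_aeval i j f
  rwa [h, sub_zero] at this

lemma aux_prime_X_sub_X {i j : σ} (h : j ≠ i) :
    Prime (X i - X j : MvPolynomial σ ℂ) := by
  let e : Option {b : σ // b ≠ i} ≃ σ := Equiv.optionSubtypeNe i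
  let E : MvPolynomial σ ℂ ≃ₐ[ℂ] Polynomial (MvPolynomial {b : σ // b ≠ i} ℂ) :=
    (renameEquiv ℂ e.symm).trans (optionEquivLeft ℂ _)
  rw [← MulEquiv.prime_iff E.toMulEquiv]
  have hXi : E (X i) = Polynomial.X := by
    show (optionEquivLeft ℂ _) (rename e.symm (X i)) = _
    rw [rename_X]
    have : e.symm i = none := Equiv.optionSubtypeNe_symm_self i
    rw [this, optionEquivLeft_X_none]
  have hXj : E (X j) = Polynomial.C (X ⟨j, h⟩) := by
    show (optionEquivLeft ℂ _) (rename e.symm (X j)) = _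
    rw [rename_X]
    have : e.symm j = some ⟨j, h⟩ := Equiv.optionSubtypeNe_symm_of_ne h
    rw [this, optionEquivLeft_X_some]
  show Prime (E.toMulEquiv (X i - X j))
  have : E.toMulEquiv (X i - X j) = Polynomial.X - Polynomial.C (X ⟨j, h⟩) := by
    show E (X i - X j) = _
    rw [map_sub, hXi, hXj]
  rw [this]
  exact Polynomial.prime_X_sub_C _

lemma aux_prod_primes_dvd {M : Type*} [CommMonoidWithZero M] [IsCancelMulZero M] {ι : Type*} [DecidableEq ι]
    (s : Finset ι) (p : ι → M) (f : M)
    (hp : ∀ l ∈ s, Prime (p l))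
    (ha : ∀ l ∈ s, ∀ l' ∈ s, l ≠ l' → ¬ Associated (p l) (p l'))
    (hd : ∀ l ∈ s, p l ∣ f) : (∏ l ∈ s, p l) ∣ f := by
  induction s using Finset.induction_on with
  | empty => simpa using one_dvd f
  | @insert a s' hans ih =>
      rw [Finset.prod_insert hans]
      obtain ⟨g, hg⟩ := ih (fun l hl => hp l (Finset.mem_insert_of_mem hl))
        (fun l hl l' hl' => ha l (Finset.mem_insert_of_mem hl) l' (Finset.mem_insert_of_mem hl'))
        (fun l hl => hd l (Finset.mem_insert_of_mem hl))
      have hpa : Prime (p a) := hp a (Finset.mem_insert_self a s')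
      have hdvd : p a ∣ (∏ l ∈ s', p l) * g := by rw [← hg]; exact hd a (Finset.mem_insert_self a s')
      rcases hpa.dvd_or_dvd hdvd with hc | hc
      · exfalso
        obtain ⟨l, hl, hdl⟩ := (Prime.dvd_finset_prod_iff hpa p).mp hc
        have : Associated (p a) (p l) := hpa.associated_of_dvd (hp l (Finset.mem_insert_of_mem hl)) hdl
        exact ha a (Finset.mem_insert_self a s') l (Finset.mem_insert_of_mem hl)
          (by rintro rfl; exact hans hl) this
      · obtain ⟨h, hh⟩ := hc
        exact ⟨h, by rw [hg, hh, ← mul_assoc, mul_comm (∏ l ∈ s', p l) (p a), mul_assoc]⟩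




lemma aux_not_associated {k : ℕ} {i j i' j' : Fin k} (hij : i < j) (hij' : i' < j')
    (hne : ¬(i = i' ∧ j = j')) :
    ¬ Associated (X j - X i : MvPolynomial (Fin k) ℂ) (X j' - X i') := by
  rintro ⟨w, hw⟩
  obtain ⟨t, ht_mem, ht1, ht2⟩ : ∃ t, (t = i ∨ t = j) ∧ t ≠ i' ∧ t ≠ j' := by
    by_cases h1 : i = i'
    · subst h1
      refine ⟨j, Or.inr rfl, ne_of_gt hij, fun hjj' => hne ⟨rfl, hjj'⟩⟩
    · by_cases h2 : i = j'
      · subst h2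
        exact ⟨j, Or.inr rfl, ne_of_gt (lt_trans hij' hij), ne_of_gt hij⟩
      · exact ⟨i, Or.inl rfl, h1, h2⟩
  classical
  set z : Fin k → ℂ := fun l => if l = t then 1 else 0 with hz
  have h0 := congrArg (MvPolynomial.eval z) hw
  rw [map_mul, map_sub, eval_X, eval_X, map_sub, eval_X, eval_X] at h0
  have hz1 : z i' = 0 := if_neg (fun h => ht1 h.symm)
  have hz2 : z j' = 0 := if_neg (fun h => ht2 h.symm)
  have hne0 : z j - z i ≠ 0 := by
    rcases ht_mem with rfl | rfl
    · have : z t = 1 := if_pos rfl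
      have hj : z j = 0 := if_neg (ne_of_gt hij)
      rw [this, hj]; norm_num
    · have : z t = 1 := if_pos rfl
      have hi : z i = 0 := if_neg (ne_of_lt hij)
      rw [this, hi]; norm_num
  have hu : MvPolynomial.eval z (w : MvPolynomial (Fin k) ℂ) ≠ 0 :=
    (w.isUnit.map (MvPolynomial.eval z)).ne_zero
  rw [hz1, hz2, sub_zero] at h0
  exact (mul_ne_zero hne0 hu) h0


lemma aux_vandermonde_dvd {k : ℕ} (F : MvPolynomial (Fin k) ℂ)
    (hF : ∀ a b : Fin k, a < b →
      MvPolynomial.aeval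
        (Function.update MvPolynomial.X b (X a) : Fin k → MvPolynomial (Fin k) ℂ) F = 0) :
    (∏ i : Fin k, ∏ j ∈ Finset.Ioi i, (X j - X i : MvPolynomial (Fin k) ℂ)) ∣ F := by
  rw [Finset.prod_sigma' Finset.univ (fun i => Finset.Ioi i)
    (fun i j => (X j - X i : MvPolynomial (Fin k) ℂ))]
  apply aux_prod_primes_dvd
  · intro l hl
    have h : l.1 < l.2 := Finset.mem_Ioi.mp (Finset.mem_sigma.mp hl).2
    exact aux_prime_X_sub_X (ne_of_lt h)
  · intro l hl l' hl' hne
    have h : l.1 < l.2 := Finset.mem_Ioi.mp (Finset.mem_sigma.mp hl).2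
    have h' : l'.1 < l'.2 := Finset.mem_Ioi.mp (Finset.mem_sigma.mp hl').2
    refine aux_not_associated h h' ?_
    rintro ⟨h1, h2⟩
    exact hne (Sigma.ext h1 (heq_of_eq h2))
  · intro l hl
    have h : l.1 < l.2 := Finset.mem_Ioi.mp (Finset.mem_sigma.mp hl).2
    exact aux_dvd_of_aeval_zero l.2 l.1 F (hF l.1 l.2 h)

/-- Lemma `lem:det_quotient_laurent_polynomial`: the quotient
`det(xⱼ^{uₘ} - xⱼ^{-uₘ}) / det(xⱼ^{m} - xⱼ^{-m})` extends to a Laurent polynomial in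
`x₁,…,x_k`: there is a finitely supported family of coefficients `c` whose associated
Laurent polynomial multiplied by the denominator equals the numerator at every point
with all coordinates nonzero. -/
theorem symplectic_character_is_laurent (k : ℕ) (hk : 0 < k) (u : Fin k → ℕ) :
    ∃ c : (Fin k → ℤ) →₀ ℂ,
      ∀ x : Fin k → ℂ, (∀ j, x j ≠ 0) →
        (∑ a ∈ c.support, c a * ∏ j, x j ^ a j) *
            Matrix.det (Matrix.of fun j m : Fin k =>
              x j ^ ((m : ℕ) + 1 : ℤ) - x j ^ (-((m : ℕ) + 1) : ℤ)) =
          Matrix.det (Matrix.of fun j m : Fin k =>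
            x j ^ (u m : ℤ) - x j ^ (-(u m : ℤ))) := by
  classical
  set F : MvPolynomial (Fin k) ℂ :=
    Matrix.det (Matrix.of fun j m : Fin k =>
      Polynomial.aeval (X j : MvPolynomial (Fin k) ℂ) (chebS (u m))) with hFdef
  have hF : ∀ a b : Fin k, a < b →
      MvPolynomial.aeval
        (Function.update MvPolynomial.X b (X a) : Fin k → MvPolynomial (Fin k) ℂ) F = 0 := by
    intro a b hab
    set g : Fin k → MvPolynomial (Fin k) ℂ := Function.update MvPolynomial.X b (X a) with hg
    have hmap := RingHom.map_det (MvPolynomial.aeval (R := ℂ) g).toRingHom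
      (Matrix.of fun j m : Fin k =>
        Polynomial.aeval (X j : MvPolynomial (Fin k) ℂ) (chebS (u m)))
    simp only [RingHom.mapMatrix_apply, AlgHom.toRingHom_eq_coe, RingHom.coe_coe] at hmap
    rw [hFdef, hmap]
    apply Matrix.det_zero_of_row_eq (ne_of_gt hab)
    funext m
    simp only [Matrix.map_apply, Matrix.of_apply]
    have h1 : (MvPolynomial.aeval (R := ℂ) g) (X b) = X a := by
      rw [MvPolynomial.aeval_X, hg, Function.update_self]
    have h2 : (MvPolynomial.aeval (R := ℂ) g) (X a) = X a := by
      rw [MvPolynomial.aeval_X, hg, Function.update_of_ne (ne_of_lt hab)]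
    rw [← Polynomial.aeval_algHom_apply (MvPolynomial.aeval (R := ℂ) g)
        (X b : MvPolynomial (Fin k) ℂ) (chebS (u m)),
      ← Polynomial.aeval_algHom_apply (MvPolynomial.aeval (R := ℂ) g)
        (X a : MvPolynomial (Fin k) ℂ) (chebS (u m)), h1, h2]
  obtain ⟨Q₀, hQ⟩ := aux_vandermonde_dvd F hF
  set Y : Fin k → AddMonoidAlgebra ℂ (Fin k → ℤ) := fun j =>
    AddMonoidAlgebra.single (Pi.single j (1 : ℤ)) (1 : ℂ) +
      AddMonoidAlgebra.single (-Pi.single j (1 : ℤ)) (1 : ℂ) with hY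
  refine ⟨(MvPolynomial.aeval Y Q₀).coeff, ?_⟩
  intro x hx
  set c : AddMonoidAlgebra ℂ (Fin k → ℤ) := MvPolynomial.aeval Y Q₀ with hc
  set mh : Multiplicative (Fin k → ℤ) →* ℂ :=
    { toFun := fun a => ∏ j, x j ^ ((Multiplicative.toAdd a) j),
      map_one' := by
        refine Finset.prod_eq_one fun j _ => ?_
        exact zpow_zero _,
      map_mul' := by
        intro a b
        show (∏ j : Fin k, x j ^ ((Multiplicative.toAdd (a * b)) j)) =
          (∏ j : Fin k, x j ^ ((Multiplicative.toAdd a) j)) *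
            ∏ j : Fin k, x j ^ ((Multiplicative.toAdd b) j)
        rw [← Finset.prod_mul_distrib]
        refine Finset.prod_congr rfl fun j _ => ?_
        exact zpow_add₀ (hx j) _ _ } with hmh
  set Φ : AddMonoidAlgebra ℂ (Fin k → ℤ) →ₐ[ℂ] ℂ :=
    AddMonoidAlgebra.lift ℂ ℂ (Fin k → ℤ) mh with hΦ
  have key1 : Φ c = ∑ a ∈ c.coeff.support, c.coeff a * ∏ j, x j ^ a j := by
    rw [hΦ, AddMonoidAlgebra.lift_apply, Finsupp.sum]
    refine Finset.sum_congr rfl fun a _ => ?_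
    rw [smul_eq_mul]
    rfl
  set yv : Fin k → ℂ := fun j => x j + (x j)⁻¹ with hyv
  set d : Fin k → ℂ := fun j => x j - (x j)⁻¹ with hd
  have key2 : ∀ j, Φ (Y j) = yv j := by
    intro j
    rw [hY]
    simp only [map_add, hΦ, AddMonoidAlgebra.lift_single, one_smul]
    have e1 : mh (Multiplicative.ofAdd (Pi.single j (1 : ℤ))) = x j := by
      show ∏ l, x l ^ ((Pi.single j (1 : ℤ) : Fin k → ℤ) l) = x j
      rw [Finset.prod_eq_single j
        (fun l _ hl => by rw [Pi.single_eq_of_ne hl, zpow_zero])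
        (fun h => absurd (Finset.mem_univ j) h), Pi.single_eq_same, zpow_one]
    have e2 : mh (Multiplicative.ofAdd (-Pi.single j (1 : ℤ))) = (x j)⁻¹ := by
      show ∏ l, x l ^ ((-Pi.single j (1 : ℤ) : Fin k → ℤ) l) = (x j)⁻¹
      rw [Finset.prod_eq_single j
        (fun l _ hl => by rw [Pi.neg_apply, Pi.single_eq_of_ne hl, neg_zero, zpow_zero])
        (fun h => absurd (Finset.mem_univ j) h), Pi.neg_apply, Pi.single_eq_same, zpow_neg,
        zpow_one]
    rw [e1, e2]
  have key3 : Φ c = MvPolynomial.aeval yv Q₀ := by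
    have hfun : (fun i => Φ (Y i)) = yv := funext key2
    rw [hc, comp_aeval_apply, hfun]
  have hD : Matrix.det (Matrix.of fun j m : Fin k =>
      x j ^ ((m : ℕ) + 1 : ℤ) - x j ^ (-((m : ℕ) + 1) : ℤ)) =
      (∏ j, d j) * Matrix.det (Matrix.vandermonde yv) := by
    have hmat : (Matrix.of fun j m : Fin k =>
        x j ^ ((m : ℕ) + 1 : ℤ) - x j ^ (-((m : ℕ) + 1) : ℤ)) =
        Matrix.of fun j m : Fin k =>
          d j * ((chebS ((m : ℕ) + 1)).eval (yv j)) := by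
      ext j m
      simp only [Matrix.of_apply]
      rw [show ((m : ℕ) + 1 : ℤ) = (((m : ℕ) + 1 : ℕ) : ℤ) by push_cast; ring]
      exact (chebS_eval (x j) (hx j) ((m : ℕ) + 1)).symm
    rw [hmat]
    refine (Matrix.det_mul_column d (Matrix.of fun j m : Fin k =>
      (chebS ((m : ℕ) + 1)).eval (yv j))).trans ?_
    congr 1
    exact (Matrix.det_eval_matrixOfPolynomials_eq_det_vandermonde yv
      (fun m => chebS ((m : ℕ) + 1)) (fun m => (chebS_monic_deg (m : ℕ)).2)
      (fun m => (chebS_monic_deg (m : ℕ)).1)).symm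
  have hN : Matrix.det (Matrix.of fun j m : Fin k =>
      x j ^ (u m : ℤ) - x j ^ (-(u m : ℤ))) =
      (∏ j, d j) * Matrix.det (Matrix.of fun j m : Fin k =>
        (chebS (u m)).eval (yv j)) := by
    have hmat : (Matrix.of fun j m : Fin k =>
        x j ^ (u m : ℤ) - x j ^ (-(u m : ℤ))) =
        Matrix.of fun j m : Fin k => d j * ((chebS (u m)).eval (yv j)) := by
      ext j m
      simp only [Matrix.of_apply]
      exact (chebS_eval (x j) (hx j) (u m)).symm
    rw [hmat]
    exact Matrix.det_mul_column d (Matrix.of fun j m : Fin k => (chebS (u m)).eval (yv j))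
  have hFval : MvPolynomial.aeval yv F = Matrix.det (Matrix.of fun j m : Fin k =>
      (chebS (u m)).eval (yv j)) := by
    have hmap := RingHom.map_det (MvPolynomial.aeval (R := ℂ) yv).toRingHom
      (Matrix.of fun j m : Fin k =>
        Polynomial.aeval (X j : MvPolynomial (Fin k) ℂ) (chebS (u m)))
    simp only [RingHom.mapMatrix_apply, AlgHom.toRingHom_eq_coe, RingHom.coe_coe] at hmap
    rw [hFdef, hmap]
    congr 1
    ext j m
    simp only [Matrix.map_apply, Matrix.of_apply]
    rw [← Polynomial.aeval_algHom_apply (MvPolynomial.aeval yv)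
        (X j : MvPolynomial (Fin k) ℂ) (chebS (u m)), MvPolynomial.aeval_X]
    exact congrFun (Polynomial.coe_aeval_eq_eval (yv j)) (chebS (u m))
  have hVval : MvPolynomial.aeval yv
      (∏ i : Fin k, ∏ j ∈ Finset.Ioi i, (X j - X i : MvPolynomial (Fin k) ℂ)) =
      Matrix.det (Matrix.vandermonde yv) := by
    rw [Matrix.det_vandermonde, map_prod]
    refine Finset.prod_congr rfl fun i _ => ?_
    rw [map_prod]
    refine Finset.prod_congr rfl fun j _ => ?_
    rw [map_sub, MvPolynomial.aeval_X, MvPolynomial.aeval_X]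
  have hFy : Matrix.det (Matrix.of fun j m : Fin k => (chebS (u m)).eval (yv j)) =
      Matrix.det (Matrix.vandermonde yv) * MvPolynomial.aeval yv Q₀ := by
    rw [← hFval, hQ, map_mul, hVval]
  rw [← key1, key3, hD, hN, hFy]
  ring

end MvPart
end AuxSymplecticLaurent
end

section
/- (Aomoto-type evaluations for Selberg integrals.) Let k ≥ 1. With ⟨f⟩_L = ∫_{[0,∞)^k} f(x) · (∏_{j=1}^k √x_j) · (∏_{1≤j<m≤k}(x_m − x_j))² · e^{−(x_1+⋯+x_k)} dx and ⟨f⟩_H = ∫_{ℝ^k} f(x) · (∏_{1≤j<m≤k}(x_m − x_j))² · e^{−(x_1²+⋯+x_k²)/2} dx, one has ⟨ ∑_{j=1}^k x_j ⟩_L = (k² + k/2) · ⟨1⟩_L and ⟨ ∑_{j=1}^k x_j² ⟩_H = k² · ⟨1⟩_H. -/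
open scoped BigOperators
open MeasureTheory


lemma aomoto_key {α : Type*} [MeasurableSpace α] {μ : Measure α} (u v : α → ℝ) (c : ℝ)
    (hu : AEStronglyMeasurable u μ) (hvm : AEStronglyMeasurable v μ)
    (hv : ∀ᵐ x ∂μ, 0 ≤ v x)
    (hint : Integrable (fun x => (1 + v x) * |u x| * Real.exp (-(v x) / 2)) μ)
    (hscale : ∀ t : ℝ, 0 < t →
      (∫ x, u x * Real.exp (-(t * v x)) ∂μ)
        = t ^ (-c) * ∫ x, u x * Real.exp (-(v x)) ∂μ) :
    ∫ x, v x * (u x * Real.exp (-(v x))) ∂μ = c * ∫ x, u x * Real.exp (-(v x)) ∂μ := by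
  set A : ℝ := ∫ x, u x * Real.exp (-(v x)) ∂μ with hA
  -- derivative under the integral sign
  have hmeas : ∀ t : ℝ, AEStronglyMeasurable (fun x => u x * Real.exp (-(t * v x))) μ := by
    intro t
    exact hu.mul (Real.continuous_exp.comp_aestronglyMeasurable (hvm.const_mul t).neg)
  have hbound_le : ∀ᵐ x ∂μ, ∀ t ∈ Metric.ball (1:ℝ) (1/2),
      ‖-(v x * (u x * Real.exp (-(t * v x))))‖ ≤ (1 + v x) * |u x| * Real.exp (-(v x) / 2) := by
    filter_upwards [hv] with x hvx
    intro t ht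
    rw [Real.ball_eq_Ioo] at ht
    have ht2 : (1:ℝ)/2 ≤ t := by linarith [ht.1]
    have hexp : Real.exp (-(t * v x)) ≤ Real.exp (-(v x) / 2) := by
      apply Real.exp_le_exp.2
      nlinarith
    calc ‖-(v x * (u x * Real.exp (-(t * v x))))‖
        = v x * |u x| * Real.exp (-(t * v x)) := by
          rw [norm_neg, Real.norm_eq_abs, abs_mul, abs_mul, abs_of_nonneg hvx,
            abs_of_pos (Real.exp_pos _), mul_assoc]
      _ ≤ (1 + v x) * |u x| * Real.exp (-(v x) / 2) := by
          apply mul_le_mul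
          · apply mul_le_mul_of_nonneg_right _ (abs_nonneg _); linarith
          · exact hexp
          · positivity
          · positivity
  have hF_int : Integrable (fun x => u x * Real.exp (-((1:ℝ) * v x))) μ := by
    apply hint.mono' ((hmeas 1).congr (by simp))
    · filter_upwards [hv] with x hvx
      have : Real.exp (-((1:ℝ) * v x)) ≤ Real.exp (-(v x) / 2) := by
        apply Real.exp_le_exp.2; linarith
      rw [Real.norm_eq_abs, abs_mul, abs_of_pos (Real.exp_pos _)]
      calc |u x| * Real.exp (-(1 * v x)) ≤ |u x| * Real.exp (-(v x)/2) :=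
            mul_le_mul_of_nonneg_left this (abs_nonneg _)
        _ ≤ (1 + v x) * |u x| * Real.exp (-(v x)/2) := by
            apply mul_le_mul_of_nonneg_right _ (Real.exp_pos _).le
            nlinarith [abs_nonneg (u x)]
  have hderiv := hasDerivAt_integral_of_dominated_loc_of_deriv_le
    (μ := μ) (x₀ := (1:ℝ)) (s := Metric.ball (1:ℝ) (1/2))
    (F := fun t x => u x * Real.exp (-(t * v x)))
    (F' := fun t x => -(v x * (u x * Real.exp (-(t * v x)))))
    (bound := fun x => (1 + v x) * |u x| * Real.exp (-(v x) / 2))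
    (Metric.ball_mem_nhds _ (by norm_num))
    (Filter.Eventually.of_forall hmeas)
    hF_int
    (((hvm.mul (hmeas 1)).neg))
    hbound_le
    hint
    (by
      filter_upwards with x
      intro t ht
      have h1 : HasDerivAt (fun t : ℝ => -(t * v x)) (-(v x)) t := by
        exact ((hasDerivAt_id' t).mul_const (v x)).neg.congr_deriv (by ring)
      have h2 := (h1.exp).const_mul (u x)
      exact h2.congr_deriv (by ring))
  obtain ⟨-, hD⟩ := hderiv
  -- the other derivative, via the scaling relation
  have hrpow : HasDerivAt (fun t : ℝ => t ^ (-c) * A) (-c * A) 1 := by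
    have := (Real.hasDerivAt_rpow_const (x := (1:ℝ)) (p := -c) (Or.inl one_ne_zero)).mul_const A
    simpa using this
  have hEq : (fun t : ℝ => ∫ x, u x * Real.exp (-(t * v x)) ∂μ)
      =ᶠ[nhds (1:ℝ)] fun t => t ^ (-c) * A := by
    filter_upwards [isOpen_Ioi.mem_nhds (Set.mem_Ioi.2 one_pos)] with t ht
    exact hscale t ht
  have hD' : HasDerivAt (fun t : ℝ => ∫ x, u x * Real.exp (-(t * v x)) ∂μ) (-c * A) 1 :=
    hrpow.congr_of_eventuallyEq hEq
  have huniq : (∫ x, -(v x * (u x * Real.exp (-((1:ℝ) * v x)))) ∂μ) = -c * A :=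
    hD.unique hD'
  rw [integral_neg] at huniq
  simp only [one_mul] at huniq
  linarith


lemma exp_poly_bound (M : ℕ) {y : ℝ} (hy : 0 ≤ y) :
    (1+y)^M ≤ (1+4*(M:ℝ))^M * Real.exp (y/4) := by
  rcases Nat.eq_zero_or_pos M with hM | hM
  · subst hM
    simpa using Real.one_le_exp (by positivity)
  · have hM0 : (0:ℝ) < 4*(M:ℝ) := by positivity
    set a : ℝ := y / (4*(M:ℝ)) with ha
    have hay : y = 4*(M:ℝ)*a := by rw [ha]; field_simp
    have ha0 : 0 ≤ a := by positivity
    have h1 : 1 + y ≤ (1+4*(M:ℝ)) * Real.exp a := by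
      have hexp := Real.add_one_le_exp a
      nlinarith [Real.exp_pos a]
    calc (1+y)^M ≤ ((1+4*(M:ℝ)) * Real.exp a)^M :=
          pow_le_pow_left₀ (by positivity) h1 M
      _ = (1+4*(M:ℝ))^M * Real.exp a ^ M := mul_pow _ _ _
      _ = (1+4*(M:ℝ))^M * Real.exp ((M:ℝ) * a) := by rw [Real.exp_nat_mul]
      _ = (1+4*(M:ℝ))^M * Real.exp (y/4) := by
          congr 1
          rw [hay]
          field_simp

lemma card_lt_pairs (k : ℕ) :
    2 * (Finset.univ.filter fun p : Fin k × Fin k => p.1 < p.2).card + k = k * k := by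
  classical
  have hswap : (Finset.univ.filter fun p : Fin k × Fin k => p.1 < p.2).card
      = (Finset.univ.filter fun p : Fin k × Fin k => p.2 < p.1).card := by
    apply Finset.card_equiv (Equiv.prodComm _ _)
    intro p
    simp [Equiv.prodComm]
  have hsplit := Finset.card_filter_add_card_filter_not
    (s := (Finset.univ : Finset (Fin k × Fin k))) (p := fun p => p.1 < p.2)
  have hneg : (Finset.univ.filter fun p : Fin k × Fin k => ¬ p.1 < p.2)
      = (Finset.univ.filter fun p : Fin k × Fin k => p.2 < p.1)
        ∪ (Finset.univ.filter fun p : Fin k × Fin k => p.2 = p.1) := by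
    rw [← Finset.filter_or]
    apply Finset.filter_congr
    intro p _
    simp [not_lt, le_iff_lt_or_eq]
  have hdisj : Disjoint (Finset.univ.filter fun p : Fin k × Fin k => p.2 < p.1)
      (Finset.univ.filter fun p : Fin k × Fin k => p.2 = p.1) := by
    rw [Finset.disjoint_left]
    intro p hp hq
    simp only [Finset.mem_filter] at hp hq
    exact absurd hq.2 (ne_of_lt hp.2)
  have hdiag : (Finset.univ.filter fun p : Fin k × Fin k => p.2 = p.1)
      = Finset.univ.image (fun i : Fin k => (i, i)) := by
    ext p
    simp only [Finset.mem_filter, Finset.mem_univ, true_and, Finset.mem_image]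
    constructor
    · intro h
      exact ⟨p.1, by rw [Prod.ext_iff]; exact ⟨rfl, h.symm⟩⟩
    · rintro ⟨i, rfl⟩
      rfl
  have hdiagcard : (Finset.univ.filter fun p : Fin k × Fin k => p.2 = p.1).card = k := by
    rw [hdiag, Finset.card_image_of_injective _ (fun a b h => (Prod.ext_iff.1 h).1)]
    simp
  have huniv : (Finset.univ : Finset (Fin k × Fin k)).card = k * k := by
    simp [Finset.card_univ]
  rw [hneg, Finset.card_union_of_disjoint hdisj, hdiagcard, ← hswap, huniv] at hsplit
  omega

lemma hermite_part (k : ℕ) (hk : 0 < k) :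
    (∫ x : Fin k → ℝ,
        (∑ j, x j ^ 2) *
          ((∏ p ∈ Finset.univ.filter (fun p : Fin k × Fin k => p.1 < p.2),
              (x p.2 - x p.1)) ^ 2 *
            Real.exp (-(∑ j, x j ^ 2) / 2))) =
      (k : ℝ) ^ 2 *
        ∫ x : Fin k → ℝ,
          ((∏ p ∈ Finset.univ.filter (fun p : Fin k × Fin k => p.1 < p.2),
              (x p.2 - x p.1)) ^ 2 *
            Real.exp (-(∑ j, x j ^ 2) / 2)) := by
  classical
  set P := Finset.univ.filter (fun p : Fin k × Fin k => p.1 < p.2) with hP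
  set N := P.card with hN
  have hNr : 2 * (N:ℝ) + k = (k:ℝ)^2 := by
    have h := card_lt_pairs k
    rw [← hP, ← hN] at h
    have : ((2 * N + k : ℕ) : ℝ) = ((k * k : ℕ) : ℝ) := by rw [h]
    push_cast at this
    linarith [this]
  set u : (Fin k → ℝ) → ℝ := fun x => (∏ p ∈ P, (x p.2 - x p.1)) ^ 2 with hu_def
  set v : (Fin k → ℝ) → ℝ := fun x => (∑ j, x j ^ 2) / 2 with hv_def
  have hucont : Continuous u := by
    apply Continuous.pow
    exact continuous_finset_prod _ fun p _ => (continuous_apply p.2).sub (continuous_apply p.1)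
  have hvcont : Continuous v :=
    (continuous_finset_sum _ fun j _ => (continuous_apply j).pow 2).div_const 2
  have hv0 : ∀ x, 0 ≤ v x := by
    intro x; rw [hv_def]
    positivity
  -- integrability of the dominating expression
  have hint : Integrable (fun x : Fin k → ℝ => (1 + v x) * |u x| * Real.exp (-(v x) / 2)) volume := by
    set C : ℝ := 8^N * (1 + 4*((N:ℝ)+1))^(N+1) with hC
    have hgint : Integrable (fun x : Fin k → ℝ => C * ∏ j, Real.exp (-(1/8) * (x j)^2)) volume := by
      exact (Integrable.fintype_prod (f := fun (_ : Fin k) (y : ℝ) => Real.exp (-(1/8) * y^2))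
        (fun _ => integrable_exp_neg_mul_sq (by norm_num))).const_mul C
    apply hgint.mono'
    · exact (((continuous_const.add hvcont).mul hucont.abs).mul
        ((hvcont.neg.div_const 2).rexp)).aestronglyMeasurable
    · filter_upwards with x
      have hvx := hv0 x
      have hprod : ∏ j, Real.exp (-(1/8) * (x j)^2) = Real.exp (-(v x)/4) := by
        rw [← Real.exp_sum]
        congr 1
        rw [← Finset.mul_sum, hv_def]
        ring
      have hub : |u x| ≤ 8^N * (1 + v x)^N := by
        rw [abs_of_nonneg (sq_nonneg _)]
        have hfac : ∀ p ∈ P, (x p.2 - x p.1)^2 ≤ 8 * (1 + v x) := by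
          intro p _
          have h2 : x p.2 ^ 2 ≤ ∑ j, x j ^ 2 :=
            Finset.single_le_sum (fun j _ => sq_nonneg (x j)) (Finset.mem_univ _)
          have h1 : x p.1 ^ 2 ≤ ∑ j, x j ^ 2 :=
            Finset.single_le_sum (fun j _ => sq_nonneg (x j)) (Finset.mem_univ _)
          have hveq : (∑ j, x j ^ 2) = 2 * v x := by rw [hv_def]; ring
          rw [hveq] at h1 h2
          nlinarith [sq_nonneg (x p.2 + x p.1)]
        calc (∏ p ∈ P, (x p.2 - x p.1)) ^ 2 = ∏ p ∈ P, (x p.2 - x p.1)^2 := by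
              rw [Finset.prod_pow]
          _ ≤ ∏ p ∈ P, (8 * (1 + v x)) :=
              Finset.prod_le_prod (fun p _ => sq_nonneg _) hfac
          _ = (8 * (1 + v x))^N := by rw [Finset.prod_const, hN]
          _ = 8^N * (1 + v x)^N := mul_pow _ _ _
      have hexpb := exp_poly_bound (N+1) hvx
      calc ‖(1 + v x) * |u x| * Real.exp (-(v x) / 2)‖
          = (1 + v x) * |u x| * Real.exp (-(v x) / 2) := by
            rw [Real.norm_eq_abs, abs_of_nonneg (by positivity)]
        _ ≤ (1 + v x) * (8^N * (1 + v x)^N) * Real.exp (-(v x) / 2) := by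
            gcongr
        _ = 8^N * (1 + v x)^(N+1) * Real.exp (-(v x) / 2) := by ring
        _ ≤ 8^N * ((1 + 4*((N:ℝ)+1))^(N+1) * Real.exp (v x / 4)) * Real.exp (-(v x) / 2) := by
            gcongr
            calc (1 + v x)^(N+1) ≤ (1+4*(((N+1):ℕ):ℝ))^(N+1) * Real.exp (v x/4) := hexpb
              _ = (1 + 4*((N:ℝ)+1))^(N+1) * Real.exp (v x/4) := by push_cast; ring_nf
        _ = C * (Real.exp (v x / 4) * Real.exp (-(v x) / 2)) := by rw [hC]; ring
        _ = C * Real.exp (-(v x)/4) := by rw [← Real.exp_add]; congr 1; ring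
        _ = C * ∏ j, Real.exp (-(1/8) * (x j)^2) := by rw [hprod]
  -- scaling relation
  have hscale : ∀ t : ℝ, 0 < t →
      (∫ x : Fin k → ℝ, u x * Real.exp (-(t * v x)))
        = t ^ (-(((k:ℝ)^2)/2)) * ∫ x : Fin k → ℝ, u x * Real.exp (-(v x)) := by
    intro t ht
    have hR : 0 < Real.sqrt t := Real.sqrt_pos.2 ht
    set R := Real.sqrt t with hRdef
    have hRS : R^2 = t := Real.sq_sqrt ht.le
    have hcs := Measure.integral_comp_smul (μ := volume)
      (fun y : Fin k → ℝ => u y * Real.exp (-(v y))) R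
    have hpt : ∀ x : Fin k → ℝ,
        u (R • x) * Real.exp (-(v (R • x))) = R^(2*N) * (u x * Real.exp (-(t * v x))) := by
      intro x
      have hvRx : v (R • x) = t * v x := by
        simp only [hv_def, Pi.smul_apply, smul_eq_mul, mul_pow, ← Finset.mul_sum, ← hRS]
        ring
      have huRx : u (R • x) = R^(2*N) * u x := by
        simp only [hu_def, Pi.smul_apply, smul_eq_mul, ← mul_sub, Finset.prod_mul_distrib,
          Finset.prod_const, ← hN]
        ring
      rw [huRx, hvRx]
      ring
    simp only [hpt] at hcs
    rw [integral_const_mul] at hcs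
    rw [Module.finrank_fin_fun, smul_eq_mul, abs_of_pos (by positivity)] at hcs
    have hX : (∫ x : Fin k → ℝ, u x * Real.exp (-(t * v x)))
        = (R^(2*N))⁻¹ * ((R^k)⁻¹ * ∫ x : Fin k → ℝ, u x * Real.exp (-(v x))) := by
      rw [← hcs]
      field_simp
    rw [hX, ← mul_assoc, ← mul_inv, ← pow_add]
    congr 1
    have hRt : R ^ (2*N+k) = t ^ (((2*N+k : ℕ):ℝ)/2) := by
      rw [hRdef, Real.sqrt_eq_rpow, ← Real.rpow_natCast (t ^ ((1:ℝ)/(2:ℝ))) (2*N+k),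
        ← Real.rpow_mul ht.le]
      congr 1
      push_cast
      ring
    rw [hRt, ← Real.rpow_neg ht.le]
    congr 1
    push_cast
    linarith [hNr]
  have key := aomoto_key (μ := volume) u v (((k:ℝ)^2)/2)
    hucont.aestronglyMeasurable hvcont.aestronglyMeasurable
    (Filter.Eventually.of_forall hv0) hint hscale
  have hL : (fun x : Fin k → ℝ => (∑ j, x j ^ 2) *
      (u x * Real.exp (-(∑ j, x j ^ 2) / 2)))
      = fun x => 2 * (v x * (u x * Real.exp (-(v x)))) := by
    funext x
    rw [hv_def]
    rw [neg_div]
    ring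
  have hR : (fun x : Fin k → ℝ => u x * Real.exp (-(∑ j, x j ^ 2) / 2))
      = fun x => u x * Real.exp (-(v x)) := by
    funext x
    rw [hv_def, neg_div]
  show (∫ x : Fin k → ℝ, (∑ j, x j ^ 2) * (u x * Real.exp (-(∑ j, x j ^ 2) / 2)))
      = (k:ℝ)^2 * ∫ x : Fin k → ℝ, u x * Real.exp (-(∑ j, x j ^ 2) / 2)
  rw [hL, hR, integral_const_mul, key]
  ring

lemma laguerre_part (k : ℕ) (hk : 0 < k) :
    (∫ x : Fin k → ℝ in Set.univ.pi fun _ : Fin k => Set.Ici (0 : ℝ),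
        (∑ j, x j) *
          ((∏ j, Real.sqrt (x j)) *
            (∏ p ∈ Finset.univ.filter (fun p : Fin k × Fin k => p.1 < p.2),
              (x p.2 - x p.1)) ^ 2 *
            Real.exp (-∑ j, x j))) =
      ((k : ℝ) ^ 2 + (k : ℝ) / 2) *
        ∫ x : Fin k → ℝ in Set.univ.pi fun _ : Fin k => Set.Ici (0 : ℝ),
          ((∏ j, Real.sqrt (x j)) *
            (∏ p ∈ Finset.univ.filter (fun p : Fin k × Fin k => p.1 < p.2),
              (x p.2 - x p.1)) ^ 2 *
            Real.exp (-∑ j, x j)) := by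
  classical
  set P := Finset.univ.filter (fun p : Fin k × Fin k => p.1 < p.2) with hP
  set N := P.card with hN
  have hNr : 2 * (N:ℝ) + k = (k:ℝ)^2 := by
    have h := card_lt_pairs k
    rw [← hP, ← hN] at h
    have : ((2 * N + k : ℕ) : ℝ) = ((k * k : ℕ) : ℝ) := by rw [h]
    push_cast at this
    linarith [this]
  set S : Set (Fin k → ℝ) := Set.univ.pi fun _ : Fin k => Set.Ici (0 : ℝ) with hSdef
  have hS : MeasurableSet S := MeasurableSet.univ_pi fun _ => measurableSet_Ici
  set u : (Fin k → ℝ) → ℝ :=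
    fun x => (∏ j, Real.sqrt (x j)) * (∏ p ∈ P, (x p.2 - x p.1)) ^ 2 with hu_def
  set v : (Fin k → ℝ) → ℝ := fun x => ∑ j, x j with hv_def
  have hucont : Continuous u := by
    apply Continuous.mul
    · exact continuous_finset_prod _ fun j _ => Real.continuous_sqrt.comp (continuous_apply j)
    · exact (continuous_finset_prod _ fun p _ =>
        (continuous_apply p.2).sub (continuous_apply p.1)).pow 2
  have hvcont : Continuous v := continuous_finset_sum _ fun j _ => continuous_apply j
  have hu0 : ∀ x, 0 ≤ u x := fun x =>
    mul_nonneg (Finset.prod_nonneg fun j _ => Real.sqrt_nonneg _) (sq_nonneg _)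
  have hmemS : ∀ x : Fin k → ℝ, x ∈ S ↔ ∀ j, 0 ≤ x j := by
    intro x
    rw [hSdef, Set.mem_univ_pi]
    simp [Set.mem_Ici]
  have hv0 : ∀ᵐ x ∂(volume.restrict S), 0 ≤ v x := by
    apply ae_restrict_of_forall_mem hS
    intro x hx
    exact Finset.sum_nonneg fun j _ => (hmemS x).1 hx j
  -- integrability of the dominating expression
  have hint : Integrable (fun x : Fin k → ℝ => (1 + v x) * |u x| * Real.exp (-(v x) / 2))
      (volume.restrict S) := by
    set Mn : ℕ := 1 + k + 2*N with hMn
    set C : ℝ := (1 + 4*(Mn:ℝ))^Mn with hC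
    have h1d : Integrable
        (fun y : ℝ => (Set.Ici (0:ℝ)).indicator (fun y => Real.exp (-(y/4))) y) volume := by
      rw [integrable_indicator_iff measurableSet_Ici]
      have h0 : IntegrableOn (fun y : ℝ => Real.exp (-(1/4) * y)) (Set.Ioi 0) :=
        exp_neg_integrableOn_Ioi 0 (by norm_num)
      have h0' : IntegrableOn (fun y : ℝ => Real.exp (-(y/4))) (Set.Ioi 0) := by
        have heq : (fun y : ℝ => Real.exp (-(y/4))) = fun y : ℝ => Real.exp (-(1/4) * y) := by
          funext y
          congr 1
          ring
        rw [heq]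
        exact h0
      exact (integrableOn_Ici_iff_integrableOn_Ioi).2 h0'
    have hgint : Integrable
        (fun x : Fin k → ℝ =>
          C * ∏ j, (Set.Ici (0:ℝ)).indicator (fun y => Real.exp (-(y/4))) (x j))
        (volume.restrict S) :=
      ((Integrable.fintype_prod (fun (_ : Fin k) => h1d)).const_mul C).restrict
    apply hgint.mono'
    · exact (((continuous_const.add hvcont).mul hucont.abs).mul
        ((hvcont.neg.div_const 2).rexp)).aestronglyMeasurable.restrict
    · apply ae_restrict_of_forall_mem hS
      intro x hx
      have hxj : ∀ j, 0 ≤ x j := (hmemS x).1 hx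
      have hvx : 0 ≤ v x := Finset.sum_nonneg fun j _ => hxj j
      have hxle : ∀ j, x j ≤ v x := fun j =>
        Finset.single_le_sum (fun i _ => hxj i) (Finset.mem_univ j)
      have hprod : ∏ j, (Set.Ici (0:ℝ)).indicator (fun y => Real.exp (-(y/4))) (x j)
          = Real.exp (-(v x)/4) := by
        have : ∀ j : Fin k, (Set.Ici (0:ℝ)).indicator (fun y => Real.exp (-(y/4))) (x j)
            = Real.exp (-(x j/4)) := fun j => Set.indicator_of_mem (hxj j) _
        rw [Finset.prod_congr rfl fun j _ => this j, ← Real.exp_sum]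
        congr 1
        simp [hv_def, Finset.sum_div, neg_div]
      have hsqrt : ∀ j : Fin k, Real.sqrt (x j) ≤ 1 + v x := by
        intro j
        rcases le_total (x j) 1 with h | h
        · calc Real.sqrt (x j) ≤ 1 := Real.sqrt_le_one.mpr h
            _ ≤ 1 + v x := by linarith
        · calc Real.sqrt (x j) ≤ Real.sqrt ((x j)^2) :=
                Real.sqrt_le_sqrt (by nlinarith)
            _ = x j := Real.sqrt_sq (hxj j)
            _ ≤ 1 + v x := by linarith [hxle j]
      have hfac : ∀ p ∈ P, (x p.2 - x p.1)^2 ≤ (1 + v x)^2 := by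
        intro p _
        apply sq_le_sq'
        · have := hxle p.1; have := hxj p.2; linarith
        · have := hxle p.2; have := hxj p.1; linarith
      have hub : |u x| ≤ (1 + v x)^(k + 2*N) := by
        rw [abs_of_nonneg (hu0 x), hu_def]
        have h1 : (∏ j, Real.sqrt (x j)) ≤ (1 + v x)^k := by
          calc (∏ j, Real.sqrt (x j)) ≤ ∏ _j : Fin k, (1 + v x) :=
                Finset.prod_le_prod (fun j _ => Real.sqrt_nonneg _) (fun j _ => hsqrt j)
            _ = (1 + v x)^k := by
                rw [Finset.prod_const, Finset.card_univ, Fintype.card_fin]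
        have h2 : (∏ p ∈ P, (x p.2 - x p.1))^2 ≤ (1 + v x)^(2*N) := by
          calc (∏ p ∈ P, (x p.2 - x p.1))^2 = ∏ p ∈ P, (x p.2 - x p.1)^2 := by
                rw [Finset.prod_pow]
            _ ≤ ∏ _p ∈ P, (1 + v x)^2 :=
                Finset.prod_le_prod (fun p _ => sq_nonneg _) hfac
            _ = (1 + v x)^(2*N) := by rw [Finset.prod_const, ← hN, ← pow_mul, mul_comm 2 N]
        calc (∏ j, Real.sqrt (x j)) * (∏ p ∈ P, (x p.2 - x p.1))^2
            ≤ (1 + v x)^k * (1 + v x)^(2*N) := by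
              apply mul_le_mul h1 h2 (sq_nonneg _) (by positivity)
          _ = (1 + v x)^(k + 2*N) := by rw [← pow_add]
      calc ‖(1 + v x) * |u x| * Real.exp (-(v x) / 2)‖
          = (1 + v x) * |u x| * Real.exp (-(v x) / 2) := by
            rw [Real.norm_eq_abs, abs_of_nonneg (by positivity)]
        _ ≤ (1 + v x) * (1 + v x)^(k + 2*N) * Real.exp (-(v x) / 2) := by gcongr
        _ = (1 + v x)^Mn * Real.exp (-(v x) / 2) := by rw [hMn]; ring
        _ ≤ ((1 + 4*(Mn:ℝ))^Mn * Real.exp (v x / 4)) * Real.exp (-(v x) / 2) := by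
            gcongr
            exact exp_poly_bound Mn hvx
        _ = C * (Real.exp (v x / 4) * Real.exp (-(v x) / 2)) := by rw [hC]; ring
        _ = C * Real.exp (-(v x)/4) := by rw [← Real.exp_add]; congr 1; ring
        _ = C * ∏ j, (Set.Ici (0:ℝ)).indicator (fun y => Real.exp (-(y/4))) (x j) := by
            rw [hprod]
  -- scaling relation
  have hscale : ∀ t : ℝ, 0 < t →
      (∫ x in S, u x * Real.exp (-(t * v x)))
        = t ^ (-((k:ℝ)^2 + (k:ℝ)/2)) * ∫ x in S, u x * Real.exp (-(v x)) := by
    intro t ht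
    have hcs := Measure.integral_comp_smul (μ := volume)
      (fun y : Fin k → ℝ => S.indicator (fun y => u y * Real.exp (-(v y))) y) t
    have hpt : ∀ x : Fin k → ℝ,
        S.indicator (fun y => u y * Real.exp (-(v y))) (t • x)
          = (Real.sqrt t)^k * t^(2*N) *
            (S.indicator (fun y => u y * Real.exp (-(t * v y))) x) := by
      intro x
      by_cases hx : x ∈ S
      · have htx : t • x ∈ S := by
          rw [hmemS]
          intro j
          simp only [Pi.smul_apply, smul_eq_mul]
          exact mul_nonneg ht.le ((hmemS x).1 hx j)
        rw [Set.indicator_of_mem htx, Set.indicator_of_mem hx]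
        have hvtx : v (t • x) = t * v x := by
          simp [hv_def, Pi.smul_apply, smul_eq_mul, Finset.mul_sum]
        have hutx : u (t • x) = (Real.sqrt t)^k * t^(2*N) * u x := by
          simp only [hu_def, Pi.smul_apply, smul_eq_mul]
          rw [Finset.prod_congr rfl (fun j _ => Real.sqrt_mul ht.le (x j)),
            Finset.prod_mul_distrib, Finset.prod_const, Finset.card_univ, Fintype.card_fin]
          have hvd : ∏ p ∈ P, (t * x p.2 - t * x p.1) = t^N * ∏ p ∈ P, (x p.2 - x p.1) := by
            simp only [← mul_sub, Finset.prod_mul_distrib, Finset.prod_const, ← hN]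
          rw [hvd]
          ring
        rw [hutx, hvtx]
        ring
      · have htx : t • x ∉ S := by
          intro hmem
          apply hx
          rw [hmemS]
          intro j
          have h := (hmemS (t • x)).1 hmem j
          simp only [Pi.smul_apply, smul_eq_mul] at h
          exact (mul_nonneg_iff_of_pos_left ht).1 h
        rw [Set.indicator_of_notMem htx, Set.indicator_of_notMem hx, mul_zero]
    simp only [hpt] at hcs
    rw [integral_const_mul, integral_indicator hS, integral_indicator hS,
      Module.finrank_fin_fun, smul_eq_mul, abs_of_pos (by positivity)] at hcs
    have hX : (∫ x in S, u x * Real.exp (-(t * v x)))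
        = ((Real.sqrt t)^k * t^(2*N))⁻¹ * ((t^k)⁻¹ * ∫ x in S, u x * Real.exp (-(v x))) := by
      rw [← hcs]
      have hne : (Real.sqrt t)^k * t^(2*N) ≠ 0 := by positivity
      field_simp
    rw [hX, ← mul_assoc, ← mul_inv]
    congr 1
    have hRt : (Real.sqrt t)^k * t^(2*N) * t^k
        = t ^ ((1:ℝ)/2 * k + (2*N : ℕ) + (k:ℕ)) := by
      rw [Real.sqrt_eq_rpow, ← Real.rpow_natCast (t ^ ((1:ℝ)/(2:ℝ))) k,
        ← Real.rpow_mul ht.le, ← Real.rpow_natCast t (2*N), ← Real.rpow_natCast t k,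
        ← Real.rpow_add ht, ← Real.rpow_add ht]
    rw [hRt, ← Real.rpow_neg ht.le]
    congr 1
    push_cast
    linarith [hNr]
  have key := aomoto_key (μ := volume.restrict S) u v ((k:ℝ)^2 + (k:ℝ)/2)
    hucont.aestronglyMeasurable.restrict hvcont.aestronglyMeasurable.restrict
    hv0 hint hscale
  exact key

/-- Proposition `prop:selberg_sum_squarded_average`: Aomoto-type
evaluations for the Selberg integrals with Laguerre weight (on `[0,∞)^k`) and Hermite
weight (on `ℝ^k`). -/
theorem selberg_aomoto_evaluations (k : ℕ) (hk : 0 < k) :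
    (∫ x : Fin k → ℝ in Set.univ.pi fun _ : Fin k => Set.Ici (0 : ℝ),
        (∑ j, x j) *
          ((∏ j, Real.sqrt (x j)) *
            (∏ p ∈ Finset.univ.filter (fun p : Fin k × Fin k => p.1 < p.2),
              (x p.2 - x p.1)) ^ 2 *
            Real.exp (-∑ j, x j))) =
      ((k : ℝ) ^ 2 + (k : ℝ) / 2) *
        ∫ x : Fin k → ℝ in Set.univ.pi fun _ : Fin k => Set.Ici (0 : ℝ),
          ((∏ j, Real.sqrt (x j)) *
            (∏ p ∈ Finset.univ.filter (fun p : Fin k × Fin k => p.1 < p.2),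
              (x p.2 - x p.1)) ^ 2 *
            Real.exp (-∑ j, x j)) ∧
    (∫ x : Fin k → ℝ,
        (∑ j, x j ^ 2) *
          ((∏ p ∈ Finset.univ.filter (fun p : Fin k × Fin k => p.1 < p.2),
              (x p.2 - x p.1)) ^ 2 *
            Real.exp (-(∑ j, x j ^ 2) / 2))) =
      (k : ℝ) ^ 2 *
        ∫ x : Fin k → ℝ,
          ((∏ p ∈ Finset.univ.filter (fun p : Fin k × Fin k => p.1 < p.2),
              (x p.2 - x p.1)) ^ 2 *
            Real.exp (-(∑ j, x j ^ 2) / 2)) :=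
  ⟨laguerre_part k hk, hermite_part k hk⟩
end
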